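/- Let f : ℝⁿ → ℝⁿ and σ₁, …, σ_m : ℝⁿ → ℝⁿ be twice continuously differentiable functions with f(0) = 0 and σ_k(0) = 0 for each k. Let A = Df(0) and S_k = Dσ_k(0) be the Jacobian matrices at the origin, and let P, Q be symmetric positive definite real n×n matrices satisfying the stochastic Lyapunov equation P A + Aᵀ P + Σ_{k=1}^m S_kᵀ P S_k = −Q. Define h : ℝⁿ → ℝ by h(x) = 2 xᵀ P f(x) + Σ_{k=1}^m σ_k(x)ᵀ P σ_k(x), and set M(x) = D²h(x) + 2Q. Let ε > 0 be such that r := λ_min(Q) − ε > 0, and suppose there exists c > 0 such that every x ∈ ℝⁿ with xᵀ P x ≤ c satisfies ‖M(x)‖_F ≤ 2r. Then h(x) ≤ −ε·|x|² for every x with xᵀ P x ≤ c; in particular, h(x) < 0 for every x ≠ 0 with xᵀ P x ≤ c. -/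

import Mathlib

open Matrix

/-- Frobenius norm of a real square matrix. -/
noncomputable def frobNorm {n : ℕ} (M : Matrix (Fin n) (Fin n) ℝ) : ℝ :=
  Real.sqrt (∑ i, ∑ j, (M i j) ^ 2)

/-- Hessian matrix of a scalar function on Euclidean space. -/
noncomputable def hessianMatrix {n : ℕ} (h : EuclideanSpace ℝ (Fin n) → ℝ)
    (x : EuclideanSpace ℝ (Fin n)) : Matrix (Fin n) (Fin n) ℝ :=
  fun i j => fderiv ℝ (fderiv ℝ h) x (EuclideanSpace.single i 1) (EuclideanSpace.single j 1)

section Aux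

variable {n : ℕ}

lemma lam_le {Q : Matrix (Fin n) (Fin n) ℝ} (hQ : Q.PosDef) (x : Fin n → ℝ) :
    (⨅ i, hQ.1.eigenvalues i) * (x ⬝ᵥ x) ≤ x ⬝ᵥ Q.mulVec x := by
  set lam := ⨅ i, hQ.1.eigenvalues i with hlam
  have hbd : BddBelow (Set.range hQ.1.eigenvalues) := Set.Finite.bddBelow (Set.finite_range _)
  have hle : ∀ i, lam ≤ hQ.1.eigenvalues i := fun i => ciInf_le hbd i
  have hps : (Q - lam • (1 : Matrix (Fin n) (Fin n) ℝ)).PosSemidef := by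
    have hU : (hQ.1.eigenvectorUnitary : Matrix (Fin n) (Fin n) ℝ) *
        (star (hQ.1.eigenvectorUnitary : Matrix (Fin n) (Fin n) ℝ)) = 1 :=
      (Matrix.mem_unitaryGroup_iff).mp (hQ.1.eigenvectorUnitary).2
    have hspec := hQ.1.spectral_theorem
    have h1 : RCLike.ofReal ∘ hQ.1.eigenvalues = hQ.1.eigenvalues := by
      funext i; simp
    rw [h1, Unitary.conjStarAlgAut_apply] at hspec
    have h2 : Q - lam • (1 : Matrix (Fin n) (Fin n) ℝ) =
        (hQ.1.eigenvectorUnitary : Matrix (Fin n) (Fin n) ℝ) *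
          (diagonal (fun i => hQ.1.eigenvalues i - lam)) *
          (star (hQ.1.eigenvectorUnitary : Matrix (Fin n) (Fin n) ℝ)) := by
      have : (diagonal (fun i => hQ.1.eigenvalues i - lam)) =
          diagonal hQ.1.eigenvalues - lam • 1 := by
        rw [← Matrix.diagonal_one, ← Matrix.diagonal_smul, ← Matrix.diagonal_sub]
        congr 1; funext i j; by_cases hij : i = j <;> simp [Matrix.diagonal, hij]
      rw [this, Matrix.mul_sub, Matrix.sub_mul, ← hspec]
      congr 1
      rw [Matrix.mul_smul, Matrix.smul_mul, mul_one, hU]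
    rw [h2]
    exact (Matrix.posSemidef_diagonal_iff.mpr
      (fun i => by linarith [hle i])).mul_mul_conjTranspose_same _
  have := hps.dotProduct_mulVec_nonneg x
  have hstar : star x = x := by simp
  rw [hstar, Matrix.sub_mulVec, Matrix.smul_mulVec, Matrix.one_mulVec,
    dotProduct_sub, dotProduct_smul] at this
  simp only [smul_eq_mul] at this
  linarith

lemma frob_bound (M : Matrix (Fin n) (Fin n) ℝ) (v : Fin n → ℝ) :
    v ⬝ᵥ M.mulVec v ≤ frobNorm M * (∑ i, v i ^ 2) := by
  set s := ∑ i, v i ^ 2 with hs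
  have hs0 : 0 ≤ s := Finset.sum_nonneg fun i _ => sq_nonneg _
  have hF0 : 0 ≤ ∑ i, ∑ j, (M i j) ^ 2 :=
    Finset.sum_nonneg fun i _ => Finset.sum_nonneg fun j _ => sq_nonneg _
  have h1 : (v ⬝ᵥ M.mulVec v) ^ 2 ≤ s * ∑ i, (M.mulVec v i) ^ 2 :=
    Finset.sum_mul_sq_le_sq_mul_sq Finset.univ v (M.mulVec v)
  have h2 : ∑ i, (M.mulVec v i) ^ 2 ≤ (∑ i, ∑ j, (M i j) ^ 2) * s := by
    rw [Finset.sum_mul]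
    refine Finset.sum_le_sum fun i _ => ?_
    exact Finset.sum_mul_sq_le_sq_mul_sq Finset.univ (fun j => M i j) v
  have h3 : (v ⬝ᵥ M.mulVec v) ^ 2 ≤ (∑ i, ∑ j, (M i j) ^ 2) * s ^ 2 := by
    calc (v ⬝ᵥ M.mulVec v) ^ 2 ≤ s * ((∑ i, ∑ j, (M i j) ^ 2) * s) :=
          h1.trans (by nlinarith)
      _ = (∑ i, ∑ j, (M i j) ^ 2) * s ^ 2 := by ring
  calc v ⬝ᵥ M.mulVec v ≤ |v ⬝ᵥ M.mulVec v| := le_abs_self _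
    _ = Real.sqrt ((v ⬝ᵥ M.mulVec v) ^ 2) := (Real.sqrt_sq_eq_abs _).symm
    _ ≤ Real.sqrt ((∑ i, ∑ j, (M i j) ^ 2) * s ^ 2) := Real.sqrt_le_sqrt h3
    _ = frobNorm M * s := by
        rw [Real.sqrt_mul hF0, Real.sqrt_sq hs0]; rfl

lemma taylor_key (h : EuclideanSpace ℝ (Fin n) → ℝ) (hC : ContDiff ℝ 2 h)
    (h0 : h 0 = 0) (hd0 : fderiv ℝ h 0 = 0) (x : EuclideanSpace ℝ (Fin n)) :
    ∃ t ∈ Set.Ioo (0:ℝ) 1, h x = (fderiv ℝ (fderiv ℝ h) (t • x) x) x / 2 := by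
  set g : ℝ → ℝ := fun t => h (t • x) with hg
  have hline : ∀ t : ℝ, HasDerivAt (fun s : ℝ => s • x) x t := fun t => by
    simpa using (hasDerivAt_id t).smul_const x
  have hdiff := hC.differentiable (by norm_num)
  have hg' : ∀ t, HasDerivAt g (fderiv ℝ h (t • x) x) t := fun t =>
    (hdiff (t • x)).hasFDerivAt.comp_hasDerivAt t (hline t)
  have hF : ContDiff ℝ 1 (fderiv ℝ h) := hC.fderiv_right (by norm_num)
  have hg'' : ∀ t, HasDerivAt (fun s : ℝ => fderiv ℝ h (s • x) x)
      ((fderiv ℝ (fderiv ℝ h) (t • x) x) x) t := fun t => by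
    have h1 : HasDerivAt (fun s : ℝ => fderiv ℝ h (s • x))
        (fderiv ℝ (fderiv ℝ h) (t • x) x) t :=
      ((hF.differentiable (by norm_num)) (t • x)).hasFDerivAt.comp_hasDerivAt t (hline t)
    simpa using h1.clm_apply (hasDerivAt_const t x)
  have hlineC : ContDiff ℝ 2 (fun s : ℝ => s • x) := contDiff_id.smul contDiff_const
  have hgC : ContDiff ℝ 2 g := hC.comp hlineC
  have hunique : UniqueDiffOn ℝ (Set.Icc (0:ℝ) 1) := uniqueDiffOn_Icc zero_lt_one
  have hIcc : ContDiffOn ℝ 1 g (Set.Icc 0 1) := (hgC.of_le one_le_two).contDiffOn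
  have hderivWithin : ∀ t ∈ Set.Icc (0:ℝ) 1,
      derivWithin g (Set.Icc 0 1) t = fderiv ℝ h (t • x) x := fun t ht =>
    (hg' t).hasDerivWithinAt.derivWithin (hunique t ht)
  have heq1 : ∀ s ∈ Set.Icc (0:ℝ) 1,
      iteratedDerivWithin 1 g (Set.Icc 0 1) s = fderiv ℝ h (s • x) x := fun s hs => by
    rw [iteratedDerivWithin_one]; exact hderivWithin s hs
  have hdiffOn : DifferentiableOn ℝ (iteratedDerivWithin 1 g (Set.Icc 0 1))
      (Set.Ioo 0 1) := by
    intro t ht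
    refine ((hg'' t).differentiableAt.differentiableWithinAt).congr
      (fun s hs => heq1 s (Set.Ioo_subset_Icc_self hs)) (heq1 t (Set.Ioo_subset_Icc_self ht))
  obtain ⟨t, ht, htay⟩ := taylor_mean_remainder_lagrange (n := 1) (x₀ := 0) (x := 1) zero_ne_one
    (by rw [Set.uIcc_of_le zero_le_one]; exact_mod_cast hIcc)
    (by rw [Set.uIcc_of_le zero_le_one, Set.uIoo_of_le zero_le_one]; exact hdiffOn)
  rw [Set.uIoo_of_le zero_le_one] at ht
  rw [Set.uIcc_of_le zero_le_one] at htay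
  refine ⟨t, ht, ?_⟩
  have htIcc : t ∈ Set.Icc (0:ℝ) 1 := Set.Ioo_subset_Icc_self ht
  have hiter2 : iteratedDerivWithin 2 g (Set.Icc 0 1) t
      = (fderiv ℝ (fderiv ℝ h) (t • x) x) x := by
    rw [iteratedDerivWithin_succ]
    rw [derivWithin_congr heq1 (heq1 t htIcc)]
    exact (hg'' t).hasDerivWithinAt.derivWithin (hunique t htIcc)
  have htaylor : taylorWithinEval g 1 (Set.Icc 0 1) 0 1 = 0 := by
    rw [taylor_within_apply]
    have e0 : iteratedDerivWithin 0 g (Set.Icc 0 1) 0 = 0 := by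
      simp [iteratedDerivWithin_zero, hg, h0]
    have e1 : iteratedDerivWithin 1 g (Set.Icc 0 1) 0 = 0 := by
      rw [heq1 0 (Set.mem_Icc.mpr ⟨le_refl _, zero_le_one⟩)]
      simp [hd0]
    simp [Finset.sum_range_succ, e0, e1]
  rw [htaylor, sub_zero] at htay
  have hg1 : g 1 = h x := by simp [hg]
  rw [hg1, hiter2] at htay
  rw [htay]
  norm_num

lemma euclid_decomp (x : EuclideanSpace ℝ (Fin n)) :
    x = ∑ i, x i • EuclideanSpace.single i (1:ℝ) := by
  ext j
  have : (∑ i, x i • EuclideanSpace.single i (1:ℝ)) j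
      = ∑ i, (x i • EuclideanSpace.single i (1:ℝ)) j := by
      rw [WithLp.ofLp_sum, Finset.sum_apply]
  rw [this]
  simp [EuclideanSpace.single_apply]

lemma bilin_eq
    (B : EuclideanSpace ℝ (Fin n) →L[ℝ] (EuclideanSpace ℝ (Fin n) →L[ℝ] ℝ))
    (x : EuclideanSpace ℝ (Fin n)) :
    B x x = x ⬝ᵥ (Matrix.of fun i j =>
      B (EuclideanSpace.single i 1) (EuclideanSpace.single j 1)).mulVec x := by
  have step1 : ∀ u : EuclideanSpace ℝ (Fin n),
      B u x = ∑ j, x j * B u (EuclideanSpace.single j 1) := by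
    intro u
    conv_lhs => rw [euclid_decomp x]
    rw [map_sum]
    exact Finset.sum_congr rfl fun j _ => by rw [_root_.map_smul]; simp [smul_eq_mul]
  have step2 : ∀ j : Fin n, B x (EuclideanSpace.single j 1)
      = ∑ i, x i * B (EuclideanSpace.single i 1) (EuclideanSpace.single j 1) := by
    intro j
    conv_lhs => rw [euclid_decomp x]
    rw [map_sum, ContinuousLinearMap.sum_apply]
    exact Finset.sum_congr rfl fun i _ => by
      rw [_root_.map_smul, ContinuousLinearMap.smul_apply]; simp [smul_eq_mul]
  rw [step1 x]
  have : ∀ j ∈ Finset.univ, x j * B x (EuclideanSpace.single j 1)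
      = x j * ∑ i, x i * B (EuclideanSpace.single i 1) (EuclideanSpace.single j 1) :=
    fun j _ => by rw [step2 j]
  rw [Finset.sum_congr rfl this]
  have rhs_eq : x ⬝ᵥ (Matrix.of fun i j =>
      B (EuclideanSpace.single i 1) (EuclideanSpace.single j 1)).mulVec x
      = ∑ i, ∑ j, x i * (B (EuclideanSpace.single i 1) (EuclideanSpace.single j 1) * x j) := by
    simp [dotProduct, mulVec, Finset.mul_sum]
  rw [rhs_eq, Finset.sum_comm]
  refine Finset.sum_congr rfl fun j _ => ?_
  rw [Finset.mul_sum]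
  exact Finset.sum_congr rfl fun i _ => by ring

lemma contDiff_comp_proj {g : EuclideanSpace ℝ (Fin n) → EuclideanSpace ℝ (Fin n)}
    (hg : ContDiff ℝ 2 g) (i : Fin n) :
    ContDiff ℝ 2 (fun x : EuclideanSpace ℝ (Fin n) => g x i) :=
  (EuclideanSpace.proj (𝕜 := ℝ) i).contDiff.comp hg

lemma contDiff_dotP (P : Matrix (Fin n) (Fin n) ℝ)
    {g₁ g₂ : EuclideanSpace ℝ (Fin n) → EuclideanSpace ℝ (Fin n)}
    (h₁ : ContDiff ℝ 2 g₁) (h₂ : ContDiff ℝ 2 g₂) :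
    ContDiff ℝ 2 (fun x : EuclideanSpace ℝ (Fin n) => g₁ x ⬝ᵥ P.mulVec (g₂ x)) := by
  have key : (fun x : EuclideanSpace ℝ (Fin n) => g₁ x ⬝ᵥ P.mulVec (g₂ x))
      = fun x : EuclideanSpace ℝ (Fin n) => ∑ i, (g₁ x i) * ∑ j, P i j * (g₂ x j) := rfl
  rw [key]
  refine ContDiff.sum fun i _ => ?_
  exact (contDiff_comp_proj h₁ i).mul
    (ContDiff.sum fun j _ => contDiff_const.mul (contDiff_comp_proj h₂ j))

lemma dotP_hasFDerivAt_zero (P : Matrix (Fin n) (Fin n) ℝ)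
    {g₁ g₂ : EuclideanSpace ℝ (Fin n) → EuclideanSpace ℝ (Fin n)}
    (h₁ : ContDiff ℝ 2 g₁) (h₂ : ContDiff ℝ 2 g₂)
    (h₁0 : g₁ 0 = 0) (h₂0 : g₂ 0 = 0) :
    HasFDerivAt (fun x : EuclideanSpace ℝ (Fin n) => g₁ x ⬝ᵥ P.mulVec (g₂ x))
      (0 : EuclideanSpace ℝ (Fin n) →L[ℝ] ℝ) 0 := by
  have key : (fun x : EuclideanSpace ℝ (Fin n) => g₁ x ⬝ᵥ P.mulVec (g₂ x))
      = fun x : EuclideanSpace ℝ (Fin n) => ∑ i, (g₁ x i) * ∑ j, P i j * (g₂ x j) := rfl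
  rw [key]
  have hterm : ∀ i : Fin n,
      HasFDerivAt (fun x : EuclideanSpace ℝ (Fin n) => (g₁ x i) * ∑ j, P i j * (g₂ x j))
        (0 : EuclideanSpace ℝ (Fin n) →L[ℝ] ℝ) 0 := by
    intro i
    have hc : DifferentiableAt ℝ (fun x : EuclideanSpace ℝ (Fin n) => g₁ x i) 0 :=
      ((contDiff_comp_proj h₁ i).differentiable (by norm_num)).differentiableAt
    have hd : DifferentiableAt ℝ
        (fun x : EuclideanSpace ℝ (Fin n) => ∑ j, P i j * (g₂ x j)) 0 :=
      ((ContDiff.sum fun j _ => contDiff_const.mul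
        (contDiff_comp_proj h₂ j)).differentiable (by norm_num)).differentiableAt
    have := hc.hasFDerivAt.mul hd.hasFDerivAt
    simp [h₁0, h₂0] at this; exact this
  have := HasFDerivAt.fun_sum (fun i (_ : i ∈ Finset.univ) => hterm i)
  simpa using this

lemma norm_sq_eq_sum (x : EuclideanSpace ℝ (Fin n)) :
    ∑ i, x i ^ 2 = ‖x‖ ^ 2 := by
  have h1 : ‖x‖ ^ 2 = ∑ i, ‖x i‖ ^ 2 := by
    rw [EuclideanSpace.norm_eq, Real.sq_sqrt
      (Finset.sum_nonneg fun i _ => sq_nonneg _)]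
  rw [h1]
  exact Finset.sum_congr rfl fun i _ => by rw [Real.norm_eq_abs, sq_abs]

end Aux

theorem stmt0 {n m : ℕ}
    (f : EuclideanSpace ℝ (Fin n) → EuclideanSpace ℝ (Fin n))
    (σ : Fin m → EuclideanSpace ℝ (Fin n) → EuclideanSpace ℝ (Fin n))
    (hf : ContDiff ℝ 2 f) (hσ : ∀ k, ContDiff ℝ 2 (σ k))
    (hf0 : f 0 = 0) (hσ0 : ∀ k, σ k 0 = 0)
    (A : Matrix (Fin n) (Fin n) ℝ) (S : Fin m → Matrix (Fin n) (Fin n) ℝ)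
    (hA : ∀ v, fderiv ℝ f 0 v = A.mulVec v)
    (hS : ∀ k v, fderiv ℝ (σ k) 0 v = (S k).mulVec v)
    (P Q : Matrix (Fin n) (Fin n) ℝ) (hP : P.PosDef) (hQ : Q.PosDef)
    (hLyap : P * A + Aᵀ * P + ∑ k, (S k)ᵀ * P * S k = -Q)
    (h : EuclideanSpace ℝ (Fin n) → ℝ)
    (hh : ∀ x, h x = 2 * (x ⬝ᵥ P.mulVec (f x)) + ∑ k, (σ k x) ⬝ᵥ P.mulVec (σ k x))
    (M : EuclideanSpace ℝ (Fin n) → Matrix (Fin n) (Fin n) ℝ)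
    (hM : ∀ x, M x = hessianMatrix h x + (2 : ℝ) • Q)
    (ε : ℝ) (hε : 0 < ε)
    (r : ℝ) (hr : r = (⨅ i, hQ.1.eigenvalues i) - ε) (hrpos : 0 < r)
    (c : ℝ) (hc : 0 < c)
    (hcond : ∀ x : EuclideanSpace ℝ (Fin n), x ⬝ᵥ P.mulVec x ≤ c → frobNorm (M x) ≤ 2 * r) :
    (∀ x : EuclideanSpace ℝ (Fin n), x ⬝ᵥ P.mulVec x ≤ c → h x ≤ -ε * ‖x‖ ^ 2) ∧
    (∀ x : EuclideanSpace ℝ (Fin n), x ≠ 0 → x ⬝ᵥ P.mulVec x ≤ c → h x < 0) := by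
  have hfun : h = fun x : EuclideanSpace ℝ (Fin n) => 2 * (x ⬝ᵥ P.mulVec (f x)) + ∑ k, (σ k x) ⬝ᵥ P.mulVec (σ k x) :=
    funext hh
  -- smoothness of h
  have hC : ContDiff ℝ 2 h := by
    rw [hfun]
    exact (contDiff_const.mul (contDiff_dotP P contDiff_id hf)).add
      (ContDiff.sum fun k _ => contDiff_dotP P (hσ k) (hσ k))
  -- h 0 = 0
  have h0 : h 0 = 0 := by
    rw [hh 0, hf0]
    simp [hσ0, dotProduct]
  -- fderiv h 0 = 0
  have hd0 : fderiv ℝ h 0 = 0 := by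
    have H1 : HasFDerivAt (fun x : EuclideanSpace ℝ (Fin n) => x ⬝ᵥ P.mulVec (f x))
        (0 : EuclideanSpace ℝ (Fin n) →L[ℝ] ℝ) 0 :=
      dotP_hasFDerivAt_zero P contDiff_id hf rfl hf0
    have H2 : HasFDerivAt
        (fun x : EuclideanSpace ℝ (Fin n) => ∑ k, (σ k x) ⬝ᵥ P.mulVec (σ k x))
        (0 : EuclideanSpace ℝ (Fin n) →L[ℝ] ℝ) 0 := by
      simpa using HasFDerivAt.fun_sum
        (fun k (_ : k ∈ Finset.univ) => dotP_hasFDerivAt_zero P (hσ k) (hσ k) (hσ0 k) (hσ0 k))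
    have H : HasFDerivAt h (0 : EuclideanSpace ℝ (Fin n) →L[ℝ] ℝ) 0 := by
      rw [hfun]
      have H3 := (H1.const_mul (2:ℝ)).add H2; simp at H3; exact H3
    exact H.fderiv
  -- x ⬝ᵥ P x nonneg
  have hPnn : ∀ x : EuclideanSpace ℝ (Fin n), 0 ≤ x ⬝ᵥ P.mulVec x := fun x => by
    have := hP.posSemidef.dotProduct_mulVec_nonneg x
    simpa using this
  set lam := ⨅ i, hQ.1.eigenvalues i with hlam
  -- main bound
  have main : ∀ x : EuclideanSpace ℝ (Fin n), x ⬝ᵥ P.mulVec x ≤ c → h x ≤ -ε * ‖x‖ ^ 2 := by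
    intro x hx
    obtain ⟨t, ht, heq⟩ := taylor_key h hC h0 hd0 x
    -- t • x stays in the sublevel set
    have e : (t • x) ⬝ᵥ P.mulVec (t • x) = (t * t) * (x ⬝ᵥ P.mulVec x) := by
      simp only [dotProduct, mulVec, PiLp.smul_apply, WithLp.ofLp_smul, Pi.smul_apply, smul_eq_mul, Finset.mul_sum]
      exact Finset.sum_congr rfl fun i _ => Finset.sum_congr rfl fun j _ => by ring
    have hyc : (t • x) ⬝ᵥ P.mulVec (t • x) ≤ c := by
      rw [e]
      have h1 : 0 ≤ (1 - t * t) * (x ⬝ᵥ P.mulVec x) :=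
        mul_nonneg (by nlinarith [ht.1, ht.2]) (hPnn x)
      linarith
    have hfrob := hcond (t • x) hyc
    have hB := bilin_eq (fderiv ℝ (fderiv ℝ h) (t • x)) x
    have hhessdef : (Matrix.of fun i j => (fderiv ℝ (fderiv ℝ h) (t • x))
        (EuclideanSpace.single i 1) (EuclideanSpace.single j 1)) = hessianMatrix h (t • x) := rfl
    rw [hhessdef] at hB
    have hHeq : hessianMatrix h (t • x) = M (t • x) - (2:ℝ) • Q := by
      rw [hM (t • x)]; abel
    have hsplit : x ⬝ᵥ (hessianMatrix h (t • x)).mulVec x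
        = x ⬝ᵥ (M (t • x)).mulVec x - 2 * (x ⬝ᵥ Q.mulVec x) := by
      rw [hHeq, Matrix.sub_mulVec, dotProduct_sub]
      congr 1
      rw [Matrix.smul_mulVec, dotProduct_smul, smul_eq_mul]
    have hb1 : x ⬝ᵥ (M (t • x)).mulVec x ≤ 2 * r * ‖x‖ ^ 2 := by
      refine (frob_bound _ x).trans ?_
      rw [norm_sq_eq_sum x] at *
      have hsum0 : (0:ℝ) ≤ ‖x‖ ^ 2 := sq_nonneg _
      calc frobNorm (M (t • x)) * ‖x‖ ^ 2 ≤ (2 * r) * ‖x‖ ^ 2 :=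
            mul_le_mul_of_nonneg_right hfrob hsum0
        _ = 2 * r * ‖x‖ ^ 2 := by ring
    have hb2 : lam * ‖x‖ ^ 2 ≤ x ⬝ᵥ Q.mulVec x := by
      have hll := lam_le hQ x
      have hxx : (x : Fin n → ℝ) ⬝ᵥ x = ‖x‖ ^ 2 := by
        rw [← norm_sq_eq_sum x]
        simp [dotProduct, sq]
      rwa [hxx] at hll
    have hfinal : h x = (x ⬝ᵥ (M (t • x)).mulVec x - 2 * (x ⬝ᵥ Q.mulVec x)) / 2 := by
      rw [heq, hB, hsplit]
    rw [hr] at hb1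
    rw [hfinal]
    linarith [hb1, hb2]
  refine ⟨main, fun x hx0 hxc => ?_⟩
  have hxpos : 0 < ‖x‖ := norm_pos_iff.mpr hx0
  have hle := main x hxc
  have hpos : 0 < ε * ‖x‖ ^ 2 := by positivity
  linarith
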